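/- Let ⊏ be any total order on C such that c_α ⊏ c_β whenever |α| > |β|, and let ≪ be the length-plus-lexicographic order on C* induced by ⊏ (u ≪ v if and only if |u| < |v|, or |u| = |v| and u precedes v lexicographically with respect to ⊏). If w, w' ∈ C* and w' is obtained from w by a single application of a rule of T, then w' ≪ w. -/

import Mathlib

/-! Common definitions: Plactic monoid, columns, rows, tableaux, the
rewriting system `(C,T)`. -/

/-- Words over the ordered alphabet `A = {1 < 2 < ⋯ < n}`, modelled as `Fin n`. -/
abbrev Word (n : ℕ) := List (Fin n)

/-- A single application, in context, of one of the Knuth defining relations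
`(xzy, zxy)` for `x ≤ y < z` and `(yxz, yzx)` for `x < y ≤ z`. -/
inductive KnuthStep (n : ℕ) : Word n → Word n → Prop
  | left (u v : Word n) (x y z : Fin n) (h1 : x ≤ y) (h2 : y < z) :
      KnuthStep n (u ++ [x, z, y] ++ v) (u ++ [z, x, y] ++ v)
  | right (u v : Word n) (x y z : Fin n) (h1 : x < y) (h2 : y ≤ z) :
      KnuthStep n (u ++ [y, x, z] ++ v) (u ++ [y, z, x] ++ v)

/-- `u =_{M_n} v`: the words `u`, `v` represent the same element of the Plactic
monoid `M_n`, i.e. they are equivalent under the congruence generated by the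
Knuth relations. -/
def PlacticEq (n : ℕ) : Word n → Word n → Prop := Relation.EqvGen (KnuthStep n)

/-- A column: a nonempty strictly decreasing word. -/
def IsColumn {n : ℕ} (w : Word n) : Prop := w ≠ [] ∧ w.Chain' (fun a b => b < a)

/-- A row: a nondecreasing word. -/
def IsRow {n : ℕ} (w : Word n) : Prop := w.Chain' (fun a b => a ≤ b)

/-- The row `α` dominates the row `β`: `|α| ≤ |β|` and `α_i > β_i` for all
`i ≤ |α|`. -/
def Dominates {n : ℕ} (α β : Word n) : Prop :=
  α.length ≤ β.length ∧
    ∀ i (hα : i < α.length) (hβ : i < β.length), β[i]'hβ < α[i]'hα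

/-- `rs` is the list of rows, from top to bottom, of (the planar representation
of) a tableau: each row is a nonempty row, and each row dominates the next. -/
def IsTableauRows {n : ℕ} (rs : List (Word n)) : Prop :=
  (∀ r ∈ rs, r ≠ [] ∧ IsRow r) ∧ rs.Chain' Dominates

/-- `w` is a tableau: it is the product, from top to bottom, of the rows of a
planar tableau (this decomposition is automatically the decomposition of `w`
into rows of maximal length). -/
def IsTableau {n : ℕ} (w : Word n) : Prop :=
  ∃ rs : List (Word n), IsTableauRows rs ∧ w = rs.flatten

/-- The order `⪰` on columns: for `α = α_k⋯α_1` and `β = β_l⋯β_1` (so that the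
letters of a column are indexed from the bottom, i.e. from the right-hand end
of the word), `α ⪰ β` iff `k ≥ l` and `α_i ≤ β_i` for all `i ≤ l`; that is,
`α` may appear immediately to the left of `β` in a tableau. -/
def ColGE {n : ℕ} (α β : Word n) : Prop :=
  β.length ≤ α.length ∧
    ∀ (i : ℕ) (a b : Fin n), α.reverse[i]? = some a → β.reverse[i]? = some b → a ≤ b

/-- The finite alphabet `C = {c_α : α a column}`. -/
abbrev CLetter (n : ℕ) := {w : Word n // IsColumn w}

/-- Words over the alphabet `C`. -/
abbrev CWord (n : ℕ) := List (CLetter n)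

/-- The image of a word over `C` under `c_α ↦ α`. -/
def evalC {n : ℕ} (u : CWord n) : Word n := (u.map Subtype.val).flatten

/-- `SingleColP u w`: the tableau `P(u)` consists of a single column, namely
`w`.  (Since tableaux form a cross-section of `M_n`, and a word which is a
single column is itself a tableau, this holds precisely when `w` is a column
representing the same element of `M_n` as `u`.) -/
def SingleColP (n : ℕ) (u w : Word n) : Prop := IsColumn w ∧ PlacticEq n u w

/-- `TwoColP u w₁ w₂`: the tableau `P(u)` consists of exactly two columns, with
left column `w₁` and right column `w₂`.  (Since tableaux form a cross-section
of `M_n`, and the words `w₁ w₂` with `w₁ ⪰ w₂` columns are exactly the column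
readings of two-column tableaux, this holds precisely when `w₁, w₂` are columns
with `w₁ ⪰ w₂` whose concatenation represents the same element of `M_n` as
`u`.) -/
def TwoColP (n : ℕ) (u w₁ w₂ : Word n) : Prop :=
  IsColumn w₁ ∧ IsColumn w₂ ∧ ColGE w₁ w₂ ∧ PlacticEq n u (w₁ ++ w₂)

/-- The rules of the rewriting system `T` on `C*`: for columns `α ⋡ β`,
`c_α c_β → c_γ` if `P(αβ)` is the single column `γ`, and `c_α c_β → c_γ c_δ`
if `P(αβ)` has exactly two columns `γ` (left) and `δ` (right). -/
inductive TRule (n : ℕ) : CWord n → CWord n → Prop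
  | one (α β γ : CLetter n) (h : ¬ ColGE α.1 β.1)
      (hP : SingleColP n (α.1 ++ β.1) γ.1) :
      TRule n [α, β] [γ]
  | two (α β γ δ : CLetter n) (h : ¬ ColGE α.1 β.1)
      (hP : TwoColP n (α.1 ++ β.1) γ.1 δ.1) :
      TRule n [α, β] [γ, δ]

/-- One step of rewriting using a rule of `T`, in context. -/
def TStep (n : ℕ) (u v : CWord n) : Prop :=
  ∃ p q l r, TRule n l r ∧ u = p ++ l ++ q ∧ v = p ++ r ++ q



/-! Auxiliary machinery: strictly decreasing subsequences. -/

section Aux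

variable {n : ℕ}

instance : IsTrans (Fin n) (fun a b => b < a) :=
  ⟨fun _ _ _ h1 h2 => lt_trans h2 h1⟩

/-- `s` is strictly decreasing. -/
def Dec (w : Word n) : Prop := List.Pairwise (fun a b => b < a) w

/-- `w` has a strictly decreasing subsequence of length `k`. -/
def HasDec (w : Word n) (k : ℕ) : Prop :=
  ∃ s : Word n, s.Sublist w ∧ Dec s ∧ s.length = k

theorem IsColumn.dec {w : Word n} (h : IsColumn w) : Dec w :=
  List.isChain_iff_pairwise.mp h.2

theorem sublist_triple {α : Type*} {a b c : α} {s : List α} (h : s.Sublist [a, b, c]) :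
    s = [] ∨ s = [a] ∨ s = [b] ∨ s = [c] ∨
      s = [a, b] ∨ s = [a, c] ∨ s = [b, c] ∨ s = [a, b, c] := by
  simp only [List.sublist_cons_iff, List.sublist_nil] at h
  aesop

theorem hasdec_mid {u v m m' : Word n} {k : ℕ}
    (H : ∀ s2 : Word n, s2.Sublist m → Dec s2 → ∃ s2' : Word n, s2'.Sublist m' ∧ Dec s2' ∧
      s2'.length = s2.length ∧
      (∀ c : Fin n, (∀ x ∈ s2, x < c) → ∀ x ∈ s2', x < c) ∧
      (∀ c : Fin n, (∀ x ∈ s2, c < x) → ∀ x ∈ s2', c < x)) :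
    HasDec (u ++ m ++ v) k → HasDec (u ++ m' ++ v) k := by
  rintro ⟨s, hs, hdec, hlen⟩
  rw [List.append_assoc, List.sublist_append_iff] at hs
  obtain ⟨s1, s23, rfl, hs1, hs23⟩ := hs
  rw [List.sublist_append_iff] at hs23
  obtain ⟨s2, s3, rfl, hs2, hs3⟩ := hs23
  rw [Dec, List.pairwise_append] at hdec
  obtain ⟨h1, h23all, h123⟩ := hdec
  rw [List.pairwise_append] at h23all
  obtain ⟨h2, h3, h23⟩ := h23all
  obtain ⟨s2', hsub', hdec', hlen', hup, hdown⟩ := H s2 hs2 h2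
  refine ⟨s1 ++ (s2' ++ s3), ?_, ?_, ?_⟩
  · rw [List.append_assoc]
    exact List.Sublist.append hs1 (List.Sublist.append hsub' hs3)
  · rw [Dec, List.pairwise_append, List.pairwise_append]
    refine ⟨h1, ⟨hdec', h3, fun a ha b hb => ?_⟩, fun a ha b hb => ?_⟩
    · exact hdown b (fun x hx => h23 x hx b hb) a ha
    · rcases List.mem_append.mp hb with hb | hb
      · exact hup a (fun x hx => h123 a ha x (List.mem_append_left _ hx)) b hb
      · exact h123 a ha b (List.mem_append_right _ hb)
  · simp only [List.length_append] at hlen ⊢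
    omega

end Aux

section Aux2

variable {n : ℕ}

theorem knuthstep_hasdec {u v : Word n} (h : KnuthStep n u v) (k : ℕ) :
    HasDec u k ↔ HasDec v k := by
  cases h with
  | left u v x y z h1 h2 =>
    have hxz : x < z := lt_of_le_of_lt h1 h2
    constructor
    · apply hasdec_mid
      intro s2 hsub hdec
      rcases sublist_triple hsub with rfl | rfl | rfl | rfl | rfl | rfl | rfl | rfl
      · exact ⟨[], List.nil_sublist _, hdec, rfl, fun _ h => h, fun _ h => h⟩
      · exact ⟨[x], ((List.nil_sublist [y]).cons₂ x).cons z, hdec, rfl,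
          fun _ h => h, fun _ h => h⟩
      · exact ⟨[z], (List.nil_sublist [x, y]).cons₂ z, hdec, rfl,
          fun _ h => h, fun _ h => h⟩
      · exact ⟨[y], ((((List.nil_sublist []).cons₂ y).cons x).cons z), hdec, rfl,
          fun _ h => h, fun _ h => h⟩
      · -- s2 = [x, z] : not decreasing
        simp [Dec] at hdec
        exact absurd hdec (asymm hxz)
      · -- s2 = [x, y] : not decreasing
        simp [Dec] at hdec
        exact absurd hdec (not_lt.mpr h1)
      · -- s2 = [z, y]
        exact ⟨[z, y], (((List.nil_sublist []).cons₂ y).cons x).cons₂ z, hdec, rfl,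
          fun _ h => h, fun _ h => h⟩
      · -- s2 = [x, z, y] : not decreasing
        simp [Dec] at hdec
        exact absurd hdec.1.1 (asymm hxz)
    · apply hasdec_mid
      intro s2 hsub hdec
      rcases sublist_triple hsub with rfl | rfl | rfl | rfl | rfl | rfl | rfl | rfl
      · exact ⟨[], List.nil_sublist _, hdec, rfl, fun _ h => h, fun _ h => h⟩
      · exact ⟨[z], ((List.nil_sublist [y]).cons₂ z).cons x, hdec, rfl,
          fun _ h => h, fun _ h => h⟩
      · exact ⟨[x], (List.nil_sublist [z, y]).cons₂ x, hdec, rfl,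
          fun _ h => h, fun _ h => h⟩
      · exact ⟨[y], ((((List.nil_sublist []).cons₂ y).cons z).cons x), hdec, rfl,
          fun _ h => h, fun _ h => h⟩
      · -- s2 = [z, x] ↦ [z, y]
        refine ⟨[z, y], (((List.nil_sublist []).cons₂ y).cons₂ z).cons x,
          ?_, rfl, ?_, ?_⟩
        · simp [Dec]; exact h2
        · intro c hc t ht
          have hz := hc z (by simp)
          rcases List.mem_cons.mp ht with heq | ht
          · exact heq ▸ hz
          · simp at ht; exact ht ▸ lt_trans h2 hz
        · intro c hc t ht
          have hx := hc x (by simp)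
          rcases List.mem_cons.mp ht with heq | ht
          · exact heq ▸ hc z (by simp)
          · simp at ht; exact ht ▸ lt_of_lt_of_le hx h1
      · -- s2 = [z, y]
        exact ⟨[z, y], (((List.nil_sublist []).cons₂ y).cons₂ z).cons x, hdec, rfl,
          fun _ h => h, fun _ h => h⟩
      · -- s2 = [x, y] : not decreasing
        simp [Dec] at hdec
        exact absurd hdec (not_lt.mpr h1)
      · -- s2 = [z, x, y] : not decreasing (x ≤ y)
        simp [Dec] at hdec
        exact absurd hdec.2 (not_lt.mpr h1)
  | right u v x y z h1 h2 =>
    have hxz : x < z := lt_of_lt_of_le h1 h2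
    constructor
    · apply hasdec_mid
      intro s2 hsub hdec
      rcases sublist_triple hsub with rfl | rfl | rfl | rfl | rfl | rfl | rfl | rfl
      · exact ⟨[], List.nil_sublist _, hdec, rfl, fun _ h => h, fun _ h => h⟩
      · exact ⟨[y], (List.nil_sublist [z, x]).cons₂ y, hdec, rfl,
          fun _ h => h, fun _ h => h⟩
      · exact ⟨[x], ((((List.nil_sublist []).cons₂ x).cons z).cons y), hdec, rfl,
          fun _ h => h, fun _ h => h⟩
      · exact ⟨[z], ((List.nil_sublist [x]).cons₂ z).cons y, hdec, rfl,
          fun _ h => h, fun _ h => h⟩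
      · -- s2 = [y, x]
        exact ⟨[y, x], (((List.nil_sublist []).cons₂ x).cons z).cons₂ y, hdec, rfl,
          fun _ h => h, fun _ h => h⟩
      · -- s2 = [y, z] : not decreasing
        simp [Dec] at hdec
        exact absurd hdec (not_lt.mpr h2)
      · -- s2 = [x, z] : not decreasing
        simp [Dec] at hdec
        exact absurd hdec (asymm hxz)
      · -- s2 = [y, x, z] : not decreasing
        simp [Dec] at hdec
        exact absurd hdec.2 (asymm hxz)
    · apply hasdec_mid
      intro s2 hsub hdec
      rcases sublist_triple hsub with rfl | rfl | rfl | rfl | rfl | rfl | rfl | rfl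
      · exact ⟨[], List.nil_sublist _, hdec, rfl, fun _ h => h, fun _ h => h⟩
      · exact ⟨[y], (List.nil_sublist [x, z]).cons₂ y, hdec, rfl,
          fun _ h => h, fun _ h => h⟩
      · exact ⟨[z], ((((List.nil_sublist []).cons₂ z).cons x).cons y), hdec, rfl,
          fun _ h => h, fun _ h => h⟩
      · exact ⟨[x], ((List.nil_sublist [z]).cons₂ x).cons y, hdec, rfl,
          fun _ h => h, fun _ h => h⟩
      · -- s2 = [y, z] : not decreasing
        simp [Dec] at hdec
        exact absurd hdec (not_lt.mpr h2)
      · -- s2 = [y, x]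
        exact ⟨[y, x], ((List.nil_sublist [z]).cons₂ x).cons₂ y, hdec, rfl,
          fun _ h => h, fun _ h => h⟩
      · -- s2 = [z, x] ↦ [y, x]
        refine ⟨[y, x], ((List.nil_sublist [z]).cons₂ x).cons₂ y, ?_, rfl, ?_, ?_⟩
        · simp [Dec]; exact h1
        · intro c hc t ht
          have hz := hc z (by simp)
          rcases List.mem_cons.mp ht with heq | ht
          · exact heq ▸ lt_of_le_of_lt h2 hz
          · simp at ht; exact ht ▸ hc x (by simp)
        · intro c hc t ht
          have hx := hc x (by simp)
          rcases List.mem_cons.mp ht with heq | ht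
          · exact heq ▸ lt_trans hx h1
          · simp at ht; exact ht ▸ hx
      · -- s2 = [y, z, x] : not decreasing
        simp [Dec] at hdec
        exact absurd hdec.1.1 (not_lt.mpr h2)

theorem placticeq_hasdec {u v : Word n} (h : PlacticEq n u v) (k : ℕ) :
    HasDec u k ↔ HasDec v k := by
  induction h with
  | rel _ _ h => exact knuthstep_hasdec h k
  | refl _ => exact Iff.rfl
  | symm _ _ _ ih => exact ih.symm
  | trans _ _ _ _ _ ih1 ih2 => exact ih1.trans ih2

end Aux2


section A
variable {n : ℕ}
theorem col_getElem_le {α : Word n} (hα : IsColumn α) {i j : ℕ}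
    (hij : i ≤ j) (hj : j < α.length) : α[j]'hj ≤ α[i]'(lt_of_le_of_lt hij hj) := by
  rcases Nat.eq_or_lt_of_le hij with rfl | hlt
  · exact le_refl _
  · exact le_of_lt (List.pairwise_iff_getElem.mp hα.dec i j _ _ hlt)

theorem hasdec_of_not_colGE {α β : Word n} (hα : IsColumn α) (hβ : IsColumn β)
    (h : ¬ ColGE α β) : HasDec (α ++ β) (α.length + 1) := by
  rw [ColGE] at h
  push_neg at h
  rcases lt_or_ge α.length β.length with hl | hl
  · refine ⟨β.take (α.length + 1),
      (List.take_sublist _ _).trans (List.sublist_append_right _ _),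
      List.Pairwise.sublist (List.take_sublist _ _) hβ.dec, ?_⟩
    simp only [List.length_take]
    omega
  · obtain ⟨i, a, b, ha, hb, hba⟩ := h hl
    rw [List.getElem?_eq_some_iff] at ha hb
    obtain ⟨hia, ha⟩ := ha
    obtain ⟨hib, hb⟩ := hb
    simp only [List.length_reverse] at hia hib
    rw [List.getElem_reverse] at ha hb
    refine ⟨α.take (α.length - 1 - i + 1) ++ β.drop (β.length - 1 - i),
      List.Sublist.append (List.take_sublist _ _) (List.drop_sublist _ _), ?_, ?_⟩
    · rw [Dec, List.pairwise_append]
      refine ⟨List.Pairwise.sublist (List.take_sublist _ _) hα.dec,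
        List.Pairwise.sublist (List.drop_sublist _ _) hβ.dec, ?_⟩
      intro p hp q hq
      obtain ⟨i1, hi1, hp1⟩ := List.mem_iff_getElem.mp hp
      obtain ⟨i2, hi2, hq2⟩ := List.mem_iff_getElem.mp hq
      simp only [List.length_take, List.length_drop] at hi1 hi2
      have hp1' : α[i1]'(by omega) = p := by rw [← hp1, List.getElem_take]
      have hidx : β.length - 1 - i + i2 < β.length := by omega
      have hq2' : β[β.length - 1 - i + i2]'hidx = q := by
        rw [← hq2, List.getElem_drop]
      have key1 : a ≤ p := by
        rw [← hp1', ← ha]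
        exact col_getElem_le hα (by omega) (by omega)
      have key2 : q ≤ b := by
        rw [← hq2', ← hb]
        exact col_getElem_le hβ (by omega) (by omega)
      exact lt_of_le_of_lt key2 (lt_of_lt_of_le hba key1)
    · simp only [List.length_append, List.length_take, List.length_drop]
      omega
end A

section A
variable {n : ℕ}

theorem sublist_getLast_pos {s w : Word n} (h : s.Sublist w) :
    ∀ b : Fin n, s.getLast? = some b →
      ∃ p : ℕ, ∃ hp : p < w.length, s.length - 1 ≤ p ∧ w[p] = b := by
  induction h with
  | slnil => intro b hb; simp at hb
  | @cons l₁ l₂ a h ih =>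
    intro b hb
    obtain ⟨p, hp, hle, hw⟩ := ih b hb
    exact ⟨p + 1, by simp; omega, by omega, by simpa using hw⟩
  | @cons_cons l₁ l₂ a h ih =>
    intro b hb
    rcases eq_or_ne l₁ [] with rfl | hne
    · simp at hb
      exact ⟨0, by simp, by simp, by simp [hb]⟩
    · obtain ⟨c, t, rfl⟩ := List.exists_cons_of_ne_nil hne
      rw [List.getLast?_cons_cons] at hb
      obtain ⟨p, hp, hle, hw⟩ := ih b hb
      refine ⟨p + 1, by simp; omega, ?_, by simpa using hw⟩
      simp only [List.length_cons] at hle ⊢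
      omega

theorem hasdec_le_of_colGE {γ δ : Word n} (hγ : IsColumn γ) (hδ : IsColumn δ)
    (hge : ColGE γ δ) {k : ℕ} (h : HasDec (γ ++ δ) k) : k ≤ γ.length := by
  obtain ⟨s, hs, hdec, rfl⟩ := h
  rw [List.sublist_append_iff] at hs
  obtain ⟨s1, s2, rfl, hs1, hs2⟩ := hs
  by_contra hk
  push_neg at hk
  simp only [List.length_append] at hk
  have hδγ : δ.length ≤ γ.length := hge.1
  have hl1 := hs1.length_le
  have hl2 := hs2.length_le
  have hs2ne : s2 ≠ [] := by
    intro hnil; rw [hnil] at hk; simp at hk; omega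
  have hs1ne : s1 ≠ [] := by
    intro hnil; rw [hnil] at hk; simp at hk; omega
  obtain ⟨p, hp, hple, hlast1⟩ := sublist_getLast_pos hs1 (s1.getLast hs1ne)
    (List.getLast?_eq_getLast _)
  have hs2r : s2.reverse.Sublist δ.reverse := hs2.reverse
  have hs2rne : s2.reverse ≠ [] := by simpa using hs2ne
  obtain ⟨r, hr, hrle, hlast2⟩ := sublist_getLast_pos hs2r (s2.reverse.getLast hs2rne)
    (List.getLast?_eq_getLast _)
  simp only [List.length_reverse] at hr hrle
  have hmem1 : s1.getLast hs1ne ∈ s1 := List.getLast_mem _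
  have hmem2 : s2.reverse.getLast hs2rne ∈ s2 := by
    have := List.getLast_mem hs2rne
    simpa using this
  have hba : s2.reverse.getLast hs2rne < s1.getLast hs1ne := by
    rw [Dec, List.pairwise_append] at hdec
    exact hdec.2.2 _ hmem1 _ hmem2
  have hmr : γ.length - 1 - p ≤ r := by omega
  have hmγ : γ.length - 1 - p < γ.reverse.length := by simp; omega
  have hmδ : γ.length - 1 - p < δ.reverse.length := by simp; omega
  have h1 : γ.reverse[γ.length - 1 - p]? = some (s1.getLast hs1ne) := by
    rw [List.getElem?_eq_some_iff]
    refine ⟨hmγ, ?_⟩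
    rw [List.getElem_reverse]
    have hpp : γ.length - 1 - (γ.length - 1 - p) = p := by omega
    rw [← hlast1]
    congr 1
  have h2 : δ.reverse[γ.length - 1 - p]? = some (δ.reverse[γ.length - 1 - p]'hmδ) := by
    rw [List.getElem?_eq_some_iff]
    exact ⟨hmδ, rfl⟩
  have hab := hge.2 (γ.length - 1 - p) _ _ h1 h2
  have hδinc : List.Pairwise (fun a b => a < b) δ.reverse :=
    List.pairwise_reverse.mpr hδ.dec
  have h3 : (δ.reverse[γ.length - 1 - p]'hmδ) ≤ s2.reverse.getLast hs2rne := by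
    rw [← hlast2]
    rcases Nat.eq_or_lt_of_le hmr with heq | hlt
    · subst heq; exact le_refl _
    · exact le_of_lt (List.pairwise_iff_getElem.mp hδinc (γ.length - 1 - p) r hmδ (by simpa using hr) hlt)
  exact absurd (le_trans hab h3) (not_le.mpr hba)

end A

section A
variable {n : ℕ}

theorem lex_append {β : Type*} {lt : β → β → Prop} (p : List β) {a b : β}
    (s t : List β) (h : lt a b) : List.Lex lt (p ++ a :: s) (p ++ b :: t) := by
  induction p with
  | nil => exact List.Lex.rel h
  | cons c p ih => exact List.Lex.cons ih
end A


/-- Let `⊏` be any total (strict) order on `C` such that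
`c_α ⊏ c_β` whenever `|α| > |β|`, and let `≪` be the induced
length-plus-lexicographic order on `C*` (`u ≪ v` iff `|u| < |v|`, or
`|u| = |v|` and `u` precedes `v` lexicographically with respect to `⊏`).
If `w'` is obtained from `w` by a single application of a rule of `T`, then
`w' ≪ w`. -/
theorem statement4 {n : ℕ} (lt : CLetter n → CLetter n → Prop)
    (hlt : IsStrictTotalOrder (CLetter n) lt)
    (hlen : ∀ a b : CLetter n, b.1.length < a.1.length → lt a b)
    (w w' : CWord n) (h : TStep n w w') :
    w'.length < w.length ∨ (w'.length = w.length ∧ List.Lex lt w' w) := by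
  obtain ⟨p, q, l, r, hrule, rfl, rfl⟩ := h
  cases hrule with
  | one a b g hng hP =>
    left
    simp only [List.length_append, List.length_cons, List.length_nil]
    omega
  | two a b g d hng hP =>
    right
    obtain ⟨hg, hd, hge, heq⟩ := hP
    constructor
    · simp only [List.length_append, List.length_cons, List.length_nil]
    · have hB := hasdec_of_not_colGE a.2 b.2 hng
      have hBC := (placticeq_hasdec heq (a.1.length + 1)).mp hB
      have hC := hasdec_le_of_colGE hg hd hge hBC
      have hlt' : lt g a := hlen g a (by omega)
      have := lex_append p (d :: q) (b :: q) hlt'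
      simpa using this
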